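/- Let G be a dense, K_4^3 ∪ e-free 3-graph with λ(G) > √3/18. Then G is X_4-free, where X_4 is the 3-graph on vertex set {1,...,10} whose edges are the four triples inside each of the 4-sets {1,2,3,4}, {1,2,5,6}, {1,2,7,8}, {1,2,9,10} (four copies of K_4^3 all sharing the two vertices 1,2). -/

import Mathlib

open Finset

/-- An `r`-uniform hypergraph (r-graph) with vertices drawn from `ℕ`. -/
structure HyperGraph (r : ℕ) where
  verts : Finset ℕ
  edges : Finset (Finset ℕ)
  edges_sub : ∀ e ∈ edges, e ⊆ verts
  card_eq : ∀ e ∈ edges, e.card = r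

/-- A 3-uniform hypergraph (3-graph). -/
abbrev ThreeGraph := HyperGraph 3

/-- A feasible weight vector on `G`: nonnegative weights on the vertices summing to 1. -/
def HyperGraph.IsFeasible {r : ℕ} (G : HyperGraph r) (w : ℕ → ℝ) : Prop :=
  (∀ v ∈ G.verts, 0 ≤ w v) ∧ ∑ v ∈ G.verts, w v = 1

/-- The Lagrangian function `λ(G, w) = Σ_{e ∈ E(G)} Π_{v ∈ e} w v`. -/
noncomputable def HyperGraph.lagFun {r : ℕ} (G : HyperGraph r) (w : ℕ → ℝ) : ℝ :=
  ∑ e ∈ G.edges, ∏ v ∈ e, w v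

/-- The Lagrangian `λ(G)`: the maximum of `λ(G, w)` over feasible weight vectors. -/
noncomputable def HyperGraph.lag {r : ℕ} (G : HyperGraph r) : ℝ :=
  sSup {x : ℝ | ∃ w, G.IsFeasible w ∧ G.lagFun w = x}

/-- `G` contains a copy of `F`: an injection of the vertices of `F` into those of `G`
mapping every edge of `F` to an edge of `G`. -/
def HyperGraph.ContainsCopy {r : ℕ} (G F : HyperGraph r) : Prop :=
  ∃ f : ℕ → ℕ, Set.InjOn f ↑F.verts ∧ (∀ v ∈ F.verts, f v ∈ G.verts) ∧
    ∀ e ∈ F.edges, e.image f ∈ G.edges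

/-- `G` is `F`-free. -/
def HyperGraph.Free {r : ℕ} (G F : HyperGraph r) : Prop := ¬ G.ContainsCopy F

/-- `H` is a subgraph of `G`. -/
def HyperGraph.IsSubgraph {r : ℕ} (H G : HyperGraph r) : Prop :=
  H.verts ⊆ G.verts ∧ H.edges ⊆ G.edges

/-- `G` is dense: every proper subgraph has strictly smaller Lagrangian. -/
def HyperGraph.LagDense {r : ℕ} (G : HyperGraph r) : Prop :=
  ∀ H : HyperGraph r, H.IsSubgraph G → (H.verts ≠ G.verts ∨ H.edges ≠ G.edges) →
    H.lag < G.lag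

/-- The Lagrangian density `π_λ(F) = sup { r! · λ(G) : G is F-free }`. -/
noncomputable def lagDensity {r : ℕ} (F : HyperGraph r) : ℝ :=
  sSup {x : ℝ | ∃ G : HyperGraph r, G.Free F ∧ x = (Nat.factorial r : ℝ) * G.lag}

/-- An optimum weight vector for `G`. -/
def HyperGraph.IsOptimal {r : ℕ} (G : HyperGraph r) (w : ℕ → ℝ) : Prop :=
  G.IsFeasible w ∧ G.lagFun w = G.lag

/-- `K_4^3 ∪ e`: the disjoint union of the complete 3-graph on `{1,2,3,4}`
and the single edge `{5,6,7}`. -/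
def K43e : ThreeGraph where
  verts := {1, 2, 3, 4, 5, 6, 7}
  edges := {{1, 2, 3}, {1, 2, 4}, {1, 3, 4}, {2, 3, 4}, {5, 6, 7}}
  edges_sub := by decide
  card_eq := by decide

/-- `X_4`: four copies of `K_4^3` all sharing the two vertices `1, 2`. -/
def X4 : ThreeGraph where
  verts := {1, 2, 3, 4, 5, 6, 7, 8, 9, 10}
  edges := {{1, 2, 3}, {1, 2, 4}, {1, 3, 4}, {2, 3, 4},
    {1, 2, 5}, {1, 2, 6}, {1, 5, 6}, {2, 5, 6},
    {1, 2, 7}, {1, 2, 8}, {1, 7, 8}, {2, 7, 8},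
    {1, 2, 9}, {1, 2, 10}, {1, 9, 10}, {2, 9, 10}}
  edges_sub := by decide
  card_eq := by decide

set_option maxHeartbeats 2000000

lemma P2_insert' (w : ℕ → ℝ) (a : ℕ) (s : Finset ℕ) (ha : a ∉ s) :
    ∑ p ∈ (insert a s).powersetCard 2, ∏ x ∈ p, w x
      = ∑ p ∈ s.powersetCard 2, ∏ x ∈ p, w x + w a * ∑ x ∈ s, w x := by
  rw [show (2:ℕ) = Nat.succ 1 from rfl, Finset.powersetCard_succ_insert ha]
  rw [Finset.sum_union]
  · congr 1
    rw [Finset.sum_image]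
    · rw [Finset.powersetCard_one, Finset.sum_map, Finset.mul_sum]
      apply Finset.sum_congr rfl
      intro x hx
      have hax : a ∉ ({x} : Finset ℕ) := by
        simp only [Finset.mem_singleton]
        rintro rfl; exact ha hx
      simp [Finset.prod_insert hax]
    · intro p hp q hq hpq
      have hap : a ∉ p := fun h => ha ((Finset.mem_powersetCard.1 hp).1 h)
      have haq : a ∉ q := fun h => ha ((Finset.mem_powersetCard.1 hq).1 h)
      rw [← Finset.erase_insert hap, ← Finset.erase_insert haq, hpq]
  · rw [Finset.disjoint_left]
    intro p hp hp'
    have hap : a ∉ p := fun h => ha ((Finset.mem_powersetCard.1 hp).1 h)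
    obtain ⟨q, _, rfl⟩ := Finset.mem_image.1 hp'
    exact hap (Finset.mem_insert_self a q)

lemma P2_le' (w : ℕ → ℝ) (s : Finset ℕ) :
    ∑ p ∈ s.powersetCard 2, ∏ x ∈ p, w x ≤ (∑ x ∈ s, w x)^2 / 2 := by
  induction s using Finset.induction with
  | empty => rw [Finset.powersetCard_eq_empty.2 (by simp)]; simp
  | @insert a s ha ih =>
    rw [P2_insert' w a s ha, Finset.sum_insert ha]
    nlinarith [sq_nonneg (w a)]

lemma lag_bound' (verts : Finset ℕ) (edges : Finset (Finset ℕ)) (u v : ℕ) (huv : u ≠ v)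
    (hu : u ∈ verts) (hv : v ∈ verts)
    (hsub : ∀ e ∈ edges, e ⊆ verts) (hcard : ∀ e ∈ edges, e.card = 3)
    (hcover : ∀ e ∈ edges, u ∈ e ∨ v ∈ e)
    (w : ℕ → ℝ) (hw : ∀ x ∈ verts, 0 ≤ w x) (hw1 : ∑ x ∈ verts, w x = 1) :
    ∑ e ∈ edges, ∏ x ∈ e, w x ≤ Real.sqrt 3 / 18 := by
  classical
  set V' := (verts.erase u).erase v with hV'
  have hvu : v ∈ verts.erase u := Finset.mem_erase.2 ⟨Ne.symm huv, hv⟩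
  have hins : insert v V' = verts.erase u := Finset.insert_erase hvu
  have hvV' : v ∉ V' := Finset.notMem_erase v _
  set a := w u with had
  set b := w v with hbd
  set T := ∑ x ∈ V', w x with hT
  have hV'sub : V' ⊆ verts := (Finset.erase_subset _ _).trans (Finset.erase_subset _ _)
  have ha : 0 ≤ a := hw u hu
  have hb : 0 ≤ b := hw v hv
  have hTnn : 0 ≤ T := Finset.sum_nonneg fun x hx => hw x (hV'sub hx)
  have hsum : a + b + T = 1 := by
    rw [← hw1, ← Finset.add_sum_erase verts w hu, ← Finset.add_sum_erase _ w hvu]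
    ring
  have hsplit := Finset.sum_filter_add_sum_filter_not edges (fun e => u ∈ e)
      (fun e => ∏ x ∈ e, w x)
  have prodnn : ∀ p : Finset ℕ, p ⊆ verts → 0 ≤ ∏ x ∈ p, w x := fun p hp =>
    Finset.prod_nonneg fun x hx => hw x (hp hx)
  have bound : ∀ (z : ℕ) (s : Finset ℕ), z ∈ verts → (∀ e ∈ edges, e ⊆ verts) →
      ∀ F : Finset (Finset ℕ), F ⊆ edges → (∀ e ∈ F, z ∈ e) → (∀ e ∈ F, e.erase z ⊆ s) →
      s ⊆ verts →
      ∑ e ∈ F, ∏ x ∈ e, w x ≤ w z * ∑ p ∈ s.powersetCard 2, ∏ x ∈ p, w x := by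
    intro z s hz _ F hF hzF hFs hsv
    have step1 : ∑ e ∈ F, ∏ x ∈ e, w x = w z * ∑ e ∈ F, ∏ x ∈ e.erase z, w x := by
      rw [Finset.mul_sum]
      exact Finset.sum_congr rfl fun e he => (Finset.mul_prod_erase e w (hzF e he)).symm
    rw [step1]
    apply mul_le_mul_of_nonneg_left _ (hw z hz)
    have himg : ∑ e ∈ F, ∏ x ∈ e.erase z, w x
        = ∑ p ∈ F.image (fun e => e.erase z), ∏ x ∈ p, w x := by
      rw [Finset.sum_image]
      intro e he e' he' h
      rw [← Finset.insert_erase (hzF e he), ← Finset.insert_erase (hzF e' he'), show e.erase z = e'.erase z from h]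
    rw [himg]
    apply Finset.sum_le_sum_of_subset_of_nonneg
    · intro p hp
      obtain ⟨e, he, rfl⟩ := Finset.mem_image.1 hp
      refine Finset.mem_powersetCard.2 ⟨hFs e he, ?_⟩
      rw [Finset.card_erase_of_mem (hzF e he), hcard e (hF he)]
    · intro p hp _
      exact prodnn p ((Finset.mem_powersetCard.1 hp).1.trans hsv)
  have bu : ∑ e ∈ edges.filter (fun e => u ∈ e), ∏ x ∈ e, w x
      ≤ a * ∑ p ∈ (verts.erase u).powersetCard 2, ∏ x ∈ p, w x := by
    apply bound u (verts.erase u) hu hsub _ (Finset.filter_subset _ _)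
      (fun e he => (Finset.mem_filter.1 he).2)
      (fun e he => Finset.erase_subset_erase u (hsub e (Finset.mem_filter.1 he).1))
      (Finset.erase_subset _ _)
  have bv : ∑ e ∈ edges.filter (fun e => ¬ u ∈ e), ∏ x ∈ e, w x
      ≤ b * ∑ p ∈ V'.powersetCard 2, ∏ x ∈ p, w x := by
    apply bound v V' hv hsub _ (Finset.filter_subset _ _)
      (fun e he => ((hcover e (Finset.mem_filter.1 he).1).resolve_left (Finset.mem_filter.1 he).2))
      ?_ hV'sub
    intro e he
    have h1 : e ⊆ verts.erase u :=
      Finset.subset_erase.2 ⟨hsub e (Finset.mem_filter.1 he).1, (Finset.mem_filter.1 he).2⟩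
    exact Finset.erase_subset_erase v h1
  have hQ : ∑ p ∈ (verts.erase u).powersetCard 2, ∏ x ∈ p, w x
      = ∑ p ∈ V'.powersetCard 2, ∏ x ∈ p, w x + b * T := by
    rw [← hins, P2_insert' w v V' hvV']
  have hS := P2_le' w V'
  rw [← hsplit]
  have final : a * ((∑ p ∈ V'.powersetCard 2, ∏ x ∈ p, w x) + b * T)
      + b * (∑ p ∈ V'.powersetCard 2, ∏ x ∈ p, w x) ≤ Real.sqrt 3 / 18 := by
    have hSnn : (0:ℝ) ≤ T^2/2 - ∑ p ∈ V'.powersetCard 2, ∏ x ∈ p, w x := by linarith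
    have main : (a + b) * (T^2 / 2) + a * b * T ≤ Real.sqrt 3 / 18 := by
      have h3 : Real.sqrt 3 ^ 2 = 3 := Real.sq_sqrt (by norm_num)
      have h3' : (1.7:ℝ) ≤ Real.sqrt 3 := by
        nlinarith [Real.sq_sqrt (show (0:ℝ) ≤ 3 by norm_num), Real.sqrt_nonneg 3]
      set s := a + b with hs
      have hab : a * b * T ≤ s^2/4 * T := by nlinarith [mul_nonneg (sq_nonneg (a-b)) hTnn]
      have hT' : T = 1 - s := by linarith
      have key : s * (1-s) * (2-s) / 4 ≤ Real.sqrt 3 / 18 := by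
        nlinarith [mul_nonneg (sq_nonneg (s - 1 + Real.sqrt 3/3))
          (show (0:ℝ) ≤ 1 + 2*(Real.sqrt 3/3) - s by nlinarith)]
      have expand : s * ((1-s)^2 / 2) + s^2/4 * (1-s) = s * (1-s) * (2-s) / 4 := by ring
      rw [hT'] at hab ⊢
      linarith
    nlinarith [mul_nonneg ha hSnn, mul_nonneg hb hSnn]
  calc ∑ e ∈ edges.filter (fun e => u ∈ e), ∏ x ∈ e, w x
        + ∑ e ∈ edges.filter (fun e => ¬ u ∈ e), ∏ x ∈ e, w x
      ≤ a * ((∑ p ∈ V'.powersetCard 2, ∏ x ∈ p, w x) + b * T)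
        + b * (∑ p ∈ V'.powersetCard 2, ∏ x ∈ p, w x) := by rw [← hQ]; exact add_le_add bu bv
    _ ≤ Real.sqrt 3 / 18 := final

lemma meets' (G : ThreeGraph) (hfree : G.Free K43e) (f : ℕ → ℕ)
    (hinj : Set.InjOn f ↑X4.verts) (hv : ∀ x ∈ X4.verts, f x ∈ G.verts)
    (he : ∀ ed ∈ X4.edges, ed.image f ∈ G.edges)
    (p q : ℕ) (hpmem : p ∈ X4.verts) (hqmem : q ∈ X4.verts)
    (hp1 : p ≠ 1) (hp2 : p ≠ 2) (hq1 : q ≠ 1) (hq2 : q ≠ 2) (hpq : p ≠ q)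
    (hE1 : ({1,2,p} : Finset ℕ) ∈ X4.edges) (hE2 : ({1,2,q} : Finset ℕ) ∈ X4.edges)
    (hE3 : ({1,p,q} : Finset ℕ) ∈ X4.edges) (hE4 : ({2,p,q} : Finset ℕ) ∈ X4.edges)
    (e : Finset ℕ) (he' : e ∈ G.edges)
    (hd : ∀ z ∈ e, z ≠ f 1 ∧ z ≠ f 2 ∧ z ≠ f p ∧ z ≠ f q) : False := by
  classical
  have hne : ∀ i j, i ∈ X4.verts → j ∈ X4.verts → i ≠ j → f i ≠ f j := by
    intro i j hi hj hij h
    exact hij (hinj (Finset.mem_coe.2 hi) (Finset.mem_coe.2 hj) h)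
  have h1m : (1:ℕ) ∈ X4.verts := by decide
  have h2m : (2:ℕ) ∈ X4.verts := by decide
  obtain ⟨x, y, z, hxy, hxz, hyz, rfl⟩ := Finset.card_eq_three.1 (G.card_eq e he')
  have hx := hd x (by simp)
  have hy := hd y (by simp)
  have hz := hd z (by simp)
  have h12 : f 1 ≠ f 2 := hne 1 2 h1m h2m (by norm_num)
  have h1p : f 1 ≠ f p := hne 1 p h1m hpmem (Ne.symm hp1)
  have h1q : f 1 ≠ f q := hne 1 q h1m hqmem (Ne.symm hq1)
  have h2p : f 2 ≠ f p := hne 2 p h2m hpmem (Ne.symm hp2)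
  have h2q : f 2 ≠ f q := hne 2 q h2m hqmem (Ne.symm hq2)
  have hpq' : f p ≠ f q := hne p q hpmem hqmem hpq
  set g : ℕ → ℕ := fun n => if n = 1 then f 1 else if n = 2 then f 2 else
    if n = 3 then f p else if n = 4 then f q else if n = 5 then x else
    if n = 6 then y else z with hg
  apply hfree
  refine ⟨g, ?_, ?_, ?_⟩
  · intro a ha b hb hab
    simp only [K43e, Finset.coe_insert, Set.mem_insert_iff, Finset.coe_singleton,
      Set.mem_singleton_iff] at ha hb
    obtain ⟨hx1, hx2, hxp, hxq⟩ := hx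
    obtain ⟨hy1, hy2, hyp, hyq⟩ := hy
    obtain ⟨hz1, hz2, hzp, hzq⟩ := hz
    rcases ha with rfl|rfl|rfl|rfl|rfl|rfl|rfl <;>
      rcases hb with rfl|rfl|rfl|rfl|rfl|rfl|rfl <;>
      norm_num [hg] at hab ⊢ <;> simp_all
  · intro a ha
    have hxv : x ∈ G.verts := G.edges_sub _ he' (by simp)
    have hyv : y ∈ G.verts := G.edges_sub _ he' (by simp)
    have hzv : z ∈ G.verts := G.edges_sub _ he' (by simp)
    have h1v := hv 1 h1m
    have h2v := hv 2 h2m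
    have hpv := hv p hpmem
    have hqv := hv q hqmem
    fin_cases ha <;> simp [hg] <;> assumption
  · intro ed hed
    have i1 : ({1,2,p} : Finset ℕ).image f = {f 1, f 2, f p} := by
      simp [Finset.image_insert]
    have i2 : ({1,2,q} : Finset ℕ).image f = {f 1, f 2, f q} := by
      simp [Finset.image_insert]
    have i3 : ({1,p,q} : Finset ℕ).image f = {f 1, f p, f q} := by
      simp [Finset.image_insert]
    have i4 : ({2,p,q} : Finset ℕ).image f = {f 2, f p, f q} := by
      simp [Finset.image_insert]
    fin_cases hed
    · have := he _ hE1; rw [i1] at this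
      simpa [Finset.image_insert, hg] using this
    · have := he _ hE2; rw [i2] at this
      simpa [Finset.image_insert, hg] using this
    · have := he _ hE3; rw [i3] at this
      simpa [Finset.image_insert, hg] using this
    · have := he _ hE4; rw [i4] at this
      simpa [Finset.image_insert, hg] using this
    · simpa [Finset.image_insert, hg] using he'

/-- A dense `K_4^3 ∪ e`-free 3-graph with Lagrangian greater than `√3/18` is `X_4`-free. -/
theorem dense_K43e_free_X4_free (G : ThreeGraph) (hdense : G.LagDense)
    (hfree : G.Free K43e) (hlag : Real.sqrt 3 / 18 < G.lag) : G.Free X4 := by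
  rintro ⟨f, hinj, hv, he⟩
  have hne : ∀ i j, i ∈ X4.verts → j ∈ X4.verts → i ≠ j → f i ≠ f j := by
    intro i j hi hj hij h
    exact hij (hinj (Finset.mem_coe.2 hi) (Finset.mem_coe.2 hj) h)
  have key : ∀ e ∈ G.edges, f 1 ∈ e ∨ f 2 ∈ e := by
    intro e heG
    by_contra hcon
    push_neg at hcon
    obtain ⟨h1, h2⟩ := hcon
    have pick : ∀ p q : ℕ, p ∈ X4.verts → q ∈ X4.verts → p ≠ 1 → p ≠ 2 → q ≠ 1 → q ≠ 2 →
        p ≠ q →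
        ({1,2,p} : Finset ℕ) ∈ X4.edges → ({1,2,q} : Finset ℕ) ∈ X4.edges →
        ({1,p,q} : Finset ℕ) ∈ X4.edges → ({2,p,q} : Finset ℕ) ∈ X4.edges →
        ∃ z ∈ e, z = f p ∨ z = f q := by
      intro p q hpm hqm hp1 hp2 hq1 hq2 hpq e1 e2 e3 e4
      by_contra hno
      push_neg at hno
      refine meets' G hfree f hinj hv he p q hpm hqm hp1 hp2 hq1 hq2 hpq e1 e2 e3 e4 e heG ?_
      intro z hz
      exact ⟨fun hh => h1 (hh ▸ hz), fun hh => h2 (hh ▸ hz),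
        (hno z hz).1, (hno z hz).2⟩
    obtain ⟨z1, hz1e, hz1⟩ := pick 3 4 (by decide) (by decide) (by norm_num) (by norm_num)
      (by norm_num) (by norm_num) (by norm_num) (by decide) (by decide) (by decide) (by decide)
    obtain ⟨z2, hz2e, hz2⟩ := pick 5 6 (by decide) (by decide) (by norm_num) (by norm_num)
      (by norm_num) (by norm_num) (by norm_num) (by decide) (by decide) (by decide) (by decide)
    obtain ⟨z3, hz3e, hz3⟩ := pick 7 8 (by decide) (by decide) (by norm_num) (by norm_num)
      (by norm_num) (by norm_num) (by norm_num) (by decide) (by decide) (by decide) (by decide)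
    obtain ⟨z4, hz4e, hz4⟩ := pick 9 10 (by decide) (by decide) (by norm_num) (by norm_num)
      (by norm_num) (by norm_num) (by norm_num) (by decide) (by decide) (by decide) (by decide)
    have d : ∀ (zi zj pi qi pj qj : ℕ), pi ∈ X4.verts → qi ∈ X4.verts → pj ∈ X4.verts →
        qj ∈ X4.verts → (zi = f pi ∨ zi = f qi) → (zj = f pj ∨ zj = f qj) →
        pi ≠ pj → pi ≠ qj → qi ≠ pj → qi ≠ qj → zi ≠ zj := by
      rintro zi zj pi qi pj qj hpi hqi hpj hqj (rfl|rfl) (rfl|rfl) n1 n2 n3 n4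
      · exact hne _ _ hpi hpj n1
      · exact hne _ _ hpi hqj n2
      · exact hne _ _ hqi hpj n3
      · exact hne _ _ hqi hqj n4
    have d12 : z1 ≠ z2 := d z1 z2 3 4 5 6 (by decide) (by decide) (by decide) (by decide)
      hz1 hz2 (by norm_num) (by norm_num) (by norm_num) (by norm_num)
    have d13 : z1 ≠ z3 := d z1 z3 3 4 7 8 (by decide) (by decide) (by decide) (by decide)
      hz1 hz3 (by norm_num) (by norm_num) (by norm_num) (by norm_num)
    have d14 : z1 ≠ z4 := d z1 z4 3 4 9 10 (by decide) (by decide) (by decide) (by decide)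
      hz1 hz4 (by norm_num) (by norm_num) (by norm_num) (by norm_num)
    have d23 : z2 ≠ z3 := d z2 z3 5 6 7 8 (by decide) (by decide) (by decide) (by decide)
      hz2 hz3 (by norm_num) (by norm_num) (by norm_num) (by norm_num)
    have d24 : z2 ≠ z4 := d z2 z4 5 6 9 10 (by decide) (by decide) (by decide) (by decide)
      hz2 hz4 (by norm_num) (by norm_num) (by norm_num) (by norm_num)
    have d34 : z3 ≠ z4 := d z3 z4 7 8 9 10 (by decide) (by decide) (by decide) (by decide)
      hz3 hz4 (by norm_num) (by norm_num) (by norm_num) (by norm_num)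
    have hsub4 : ({z1, z2, z3, z4} : Finset ℕ) ⊆ e := by
      simp [Finset.insert_subset_iff, hz1e, hz2e, hz3e, hz4e]
    have hcard4 : ({z1, z2, z3, z4} : Finset ℕ).card = 4 := by
      rw [Finset.card_insert_of_notMem (by simp [d12, d13, d14]),
        Finset.card_insert_of_notMem (by simp [d23, d24]),
        Finset.card_insert_of_notMem (by simp [d34]), Finset.card_singleton]
    have hle := Finset.card_le_card hsub4
    rw [hcard4, G.card_eq e heG] at hle
    omega
  have h12 : f 1 ≠ f 2 := hne 1 2 (by decide) (by decide) (by norm_num)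
  have hle : G.lag ≤ Real.sqrt 3 / 18 := by
    apply Real.sSup_le
    · rintro x ⟨w, ⟨hwnn, hw1⟩, rfl⟩
      exact lag_bound' G.verts G.edges (f 1) (f 2) h12 (hv 1 (by decide)) (hv 2 (by decide))
        G.edges_sub G.card_eq key w hwnn hw1
    · positivity
  linarith
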